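/- Let m ≥ 1 be a real number, q > 1, and x0 > 0. Then the mean of the Stoppa distribution, ∫_{x0}^∞ x · m·q·x0^q·x^(-q-1)·(1 - (x/x0)^(-q))^(m-1) dx, equals x0·m·B(1 - 1/q, m), where B(a,b) = Γ(a)Γ(b)/Γ(a+b). -/

import Mathlib

open MeasureTheory Real

noncomputable def betaFn (a b : ℝ) : ℝ := Real.Gamma a * Real.Gamma b / Real.Gamma (a + b)

lemma real_beta_integral {a b : ℝ} (ha : 0 < a) (hb : 0 < b) :
    ∫ x in (0:ℝ)..1, x ^ (a - 1) * (1 - x) ^ (b - 1) = betaFn a b := by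
  have h := Complex.Gamma_mul_Gamma_eq_betaIntegral (s := a) (t := b) (by simpa) (by simpa)
  have hint : Complex.betaIntegral a b
      = ((∫ x in (0:ℝ)..1, x ^ (a - 1) * (1 - x) ^ (b - 1) : ℝ) : ℂ) := by
    rw [Complex.betaIntegral, ← intervalIntegral.integral_ofReal]
    refine intervalIntegral.integral_congr fun x hx => ?_
    rw [Set.uIcc_of_le (by norm_num)] at hx
    push_cast
    rw [Complex.ofReal_cpow hx.1, Complex.ofReal_cpow (by linarith [hx.2] : (0:ℝ) ≤ 1 - x)]
    push_cast
    ring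
  rw [hint] at h
  rw [Complex.Gamma_ofReal, Complex.Gamma_ofReal, show ((a:ℂ) + b) = ((a+b:ℝ):ℂ) by push_cast; ring,
    Complex.Gamma_ofReal] at h
  have h2 : (Real.Gamma a * Real.Gamma b : ℝ)
      = Real.Gamma (a+b) * ∫ x in (0:ℝ)..1, x ^ (a - 1) * (1 - x) ^ (b - 1) := by
    exact_mod_cast h
  have hpos := Real.Gamma_pos_of_pos (by linarith : (0:ℝ) < a + b)
  rw [betaFn]
  field_simp [h2]
  rw [h2]; ring

/-- The mean of the Stoppa distribution. -/
theorem stoppa_mean (m q x0 : ℝ) (hm : 1 ≤ m) (hq : 1 < q) (hx0 : 0 < x0) :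
    ∫ x in Set.Ioi x0,
        x * (m * q * x0 ^ q * x ^ (-q - 1) * (1 - (x / x0) ^ (-q)) ^ (m - 1)) =
      x0 * m * betaFn (1 - 1 / q) m := by
  have hq0 : 0 < q := by linarith
  have hqne : q ≠ 0 := ne_of_gt hq0
  set e : ℝ := -(1/q) with he
  have hene : e ≠ 0 := by rw [he]; simp [hqne]
  have heneg : e < 0 := by rw [he]; simp; positivity
  set φ : ℝ → ℝ := fun u => x0 * u ^ e with hφ
  have himg : φ '' Set.Ioo 0 1 = Set.Ioi x0 := by
    ext y
    constructor
    · rintro ⟨u, ⟨hu0, hu1⟩, rfl⟩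
      have : 1 < u ^ e := by
        rw [Real.one_lt_rpow_iff_of_pos hu0]
        exact Or.inr ⟨hu1, heneg⟩
      simpa [hφ, Set.mem_Ioi] using by nlinarith
    · intro hy
      rw [Set.mem_Ioi] at hy
      have hy0 : 0 < y := lt_trans hx0 hy
      have h1 : 1 < y / x0 := (one_lt_div hx0).2 hy
      refine ⟨(y / x0) ^ (-q), ⟨by positivity,
        Real.rpow_lt_one_of_one_lt_of_neg h1 (by linarith)⟩, ?_⟩
      show x0 * ((y / x0) ^ (-q)) ^ e = y
      rw [← Real.rpow_mul (by positivity), show -q * e = 1 by rw [he]; field_simp, Real.rpow_one]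
      field_simp
  set φ' : ℝ → ℝ := fun u => x0 * (e * u ^ (e - 1)) with hφ'
  have hderiv : ∀ u ∈ Set.Ioo (0:ℝ) 1, HasDerivWithinAt φ (φ' u) (Set.Ioo 0 1) u := by
    intro u hu
    exact ((Real.hasDerivAt_rpow_const (Or.inl (ne_of_gt hu.1))).const_mul x0).hasDerivWithinAt
  have hinj : Set.InjOn φ (Set.Ioo 0 1) := by
    intro u hu v hv huv
    have h3 : u ^ e = v ^ e := mul_left_cancel₀ (ne_of_gt hx0) huv
    exact Real.rpow_left_injOn hene (le_of_lt hu.1) (le_of_lt hv.1) h3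
  rw [← himg, MeasureTheory.integral_image_eq_integral_abs_deriv_smul measurableSet_Ioo hderiv hinj]
  have hcong : ∀ u ∈ Set.Ioo (0:ℝ) 1,
      |φ' u| • (φ u * (m * q * x0 ^ q * (φ u) ^ (-q - 1) * (1 - (φ u / x0) ^ (-q)) ^ (m - 1)))
      = x0 * m * (u ^ ((1 - 1/q) - 1) * (1 - u) ^ (m - 1)) := by
    intro u hu
    obtain ⟨hu0, hu1⟩ := hu
    have hue : (0:ℝ) < u ^ e := Real.rpow_pos_of_pos hu0 e
    have hφu : φ u / x0 = u ^ e := by rw [hφ]; field_simp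
    have h1 : (φ u / x0) ^ (-q) = u := by
      rw [hφu, ← Real.rpow_mul (le_of_lt hu0), show e * (-q) = 1 by rw [he]; field_simp,
        Real.rpow_one]
    have h2 : (φ u) ^ (-q-1) = x0 ^ (-q-1) * u ^ (e * (-q-1)) := by
      rw [hφ]
      rw [Real.mul_rpow (le_of_lt hx0) (le_of_lt hue), ← Real.rpow_mul (le_of_lt hu0)]
    have habs : |φ' u| = x0 * ((1/q) * u ^ (e-1)) := by
      rw [hφ', abs_mul, abs_mul, abs_of_pos hx0,
        abs_of_pos (Real.rpow_pos_of_pos hu0 _), abs_of_neg heneg, he]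
      ring
    have hx0q : x0 ^ q * x0 ^ (-q-1) = x0⁻¹ := by
      rw [← Real.rpow_add hx0, show q + (-q-1) = (-1:ℝ) by ring, Real.rpow_neg_one]
    have hupow : u ^ (e-1) * (u ^ e * u ^ (e * (-q-1))) = u ^ e := by
      rw [← Real.rpow_add hu0, ← Real.rpow_add hu0]
      congr 1
      rw [he]; field_simp; ring
    rw [habs, h1, h2, smul_eq_mul, hφ,
      show (1 - 1/q - 1 : ℝ) = e by rw [he]; ring]
    have hx0q' : x0 ^ q * x0 ^ (-q-1) * x0 = 1 := by
      rw [hx0q]; field_simp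
    have heq : e * q = -1 := by rw [he, neg_mul, one_div, inv_mul_cancel₀ hqne]
    have hB : u ^ (e-1) * u ^ (e*(-q-1)) = 1 := by
      rw [← Real.rpow_add hu0, show e - 1 + e * (-q-1) = 0 by linear_combination -heq,
        Real.rpow_zero]
    field_simp
    linear_combination (x0*x0^q*x0^(-q-1)) * hB + hx0q'
  rw [MeasureTheory.setIntegral_congr_fun measurableSet_Ioo hcong, MeasureTheory.integral_const_mul,
    ← MeasureTheory.integral_Ioc_eq_integral_Ioo,
    ← intervalIntegral.integral_of_le (by norm_num : (0:ℝ) ≤ 1)]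
  have h1q : 1/q < 1 := by rw [div_lt_one hq0]; exact hq
  rw [real_beta_integral (by linarith) (by linarith)]
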